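/- arXiv:1411.5494 — 2 statements merged into one kernel-verified Lean document; each statement's English description precedes it below -/
import Mathlib

section
/- Let F be a graph CNF on an (n,d,a)-expander with d ≥ 3, a > 0, n ≥ 2. Then the OBDD size of F is at least 2^{c·size(F)} where c = min{1,a}/(16d²) and size(F) = Σ_{e∈F}|e| = 2|F|. -/
abbrev Var := ℕ
abbrev Lit := Var × Bool
abbrev Clause := Finset Lit
abbrev CNF := Finset Clause

def varsClause (c : Clause) : Finset Var := c.image Prod.fst
def varsCNF (F : CNF) : Finset Var := F.sup varsClause
def sizeCNF (F : CNF) : ℕ := ∑ c ∈ F, c.card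

def satClauseOn (X : Finset Var) (f : Var → Bool) (c : Clause) : Prop :=
  ∃ l ∈ c, l.1 ∈ X ∧ f l.1 = l.2

instance (X : Finset Var) (f : Var → Bool) : DecidablePred (satClauseOn X f) := fun c => by
  unfold satClauseOn; infer_instance

def restrict (F : CNF) (X : Finset Var) (f : Var → Bool) : CNF :=
  (F.filter (fun c => ¬ satClauseOn X f c)).image (fun c => c.filter (fun l => l.1 ∉ X))

def st (F : CNF) (X : Finset Var) : Set CNF := { G | ∃ f : Var → Bool, G = restrict F X f }

noncomputable def stw (F : CNF) (σ : List Var) : ℕ :=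
  (Finset.Icc 1 σ.length).sup fun i => (st F ((σ.take i).toFinset)).ncard

def satCNF (F : CNF) (f : Var → Bool) : Prop := ∀ c ∈ F, ∃ l ∈ c, f l.1 = l.2

structure OBDD (σ : List Var) where
  size : ℕ
  label : Fin size → (Fin σ.length) ⊕ Bool
  succ : Fin size → Bool → Fin size
  source : Fin size
  ordered : ∀ v i, label v = Sum.inl i → ∀ b j, label (succ v b) = Sum.inl j → i < j

def OBDD.evalAux {σ : List Var} (D : OBDD σ) (f : Var → Bool) : ℕ → Fin D.size → Bool
  | 0, v => match D.label v with | .inr b => b | .inl _ => false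
  | n+1, v => match D.label v with
    | .inr b => b
    | .inl i => D.evalAux f n (D.succ v (f (σ.get i)))

def OBDD.eval {σ : List Var} (D : OBDD σ) (f : Var → Bool) : Bool :=
  D.evalAux f (σ.length + 1) D.source

def OBDD.computes {σ : List Var} (D : OBDD σ) (F : CNF) : Prop :=
  ∀ f : Var → Bool, D.eval f = true ↔ satCNF F f
/-- F is a graph CNF: its clauses are exactly positive 2-clauses (edges of a graph). -/
def GraphCNF (F : CNF) : Prop :=
  ∀ c ∈ F, ∃ u v : Var, u ≠ v ∧ c = ({(u, true), (v, true)} : Clause)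

/-- A set of e clauses of the graph CNF F is subfunction productive relative to the
prefix-variable set P. -/
def SubfunProductive (F : CNF) (P : Finset Var) (e : ℕ) : Prop :=
  ∃ a u : Fin e → Var,
    Function.Injective a ∧ Function.Injective u ∧
    (∀ i, a i ∈ P) ∧ (∀ i, u i ∈ varsCNF F \ P) ∧
    (∀ i, ({(a i, true), (u i, true)} : Clause) ∈ F) ∧
    (∀ i j, i ≠ j →
      ({(a i, true), (a j, true)} : Clause) ∉ F ∧
      ({(a i, true), (u j, true)} : Clause) ∉ F)

/-- The subfunction width of F. -/
noncomputable def sfw (F : CNF) : ℕ :=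
  sInf { m | ∃ σ : List Var, σ.Nodup ∧ σ.toFinset = varsCNF F ∧
    m = (Finset.Icc 1 σ.length).sup
      (fun i => sSup { e | SubfunProductive F ((σ.take i).toFinset) e }) }
/-- Vertex set of a graph given by its edge set. -/
def verts (Eg : Finset (Finset Var)) : Finset Var := Eg.sup id

/-- Open neighborhood of W in the graph with edge set Eg. -/
def nbhd (Eg : Finset (Finset Var)) (W : Finset Var) : Finset Var :=
  (verts Eg).filter (fun v => v ∉ W ∧ ∃ w ∈ W, ({v, w} : Finset Var) ∈ Eg)

/-- Eg is the edge set of an (n,d,a)-expander: n vertices, all edges of size 2,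
maximum degree ≤ d, and |N(W)| ≥ a·|W| for all W with |W| ≤ n/2. -/
def IsExpander (Eg : Finset (Finset Var)) (n d : ℕ) (a : ℝ) : Prop :=
  (verts Eg).card = n ∧
  (∀ e ∈ Eg, e.card = 2) ∧
  (∀ v ∈ verts Eg, (Eg.filter (fun e => v ∈ e)).card ≤ d) ∧
  (∀ W ⊆ verts Eg, (W.card : ℝ) ≤ (n : ℝ) / 2 → a * W.card ≤ ((nbhd Eg W).card : ℝ))
/-- Walk from a node reading only variables with position < p. -/
def OBDD.walk {σ : List Var} (D : OBDD σ) (p : ℕ) (f : Var → Bool) :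
    ℕ → Fin D.size → Fin D.size
  | 0, v => v
  | n+1, v => match D.label v with
    | .inr _ => v
    | .inl j => if j.1 < p then OBDD.walk D p f n (D.succ v (f (σ.get j))) else v

section OBDDLemmas

variable {σ : List Var} (D : OBDD σ)

theorem OBDD.walk_stop (p : ℕ) (f : Var → Bool) (n : ℕ) (v : Fin D.size) (b : Bool)
    (h : D.label v = .inr b) : D.walk p f (n+1) v = v := by
  simp [OBDD.walk, h]

theorem OBDD.walk_step (p : ℕ) (f : Var → Bool) (n : ℕ) (v : Fin D.size)
    (j : Fin σ.length) (h : D.label v = .inl j) (hj : j.1 < p) :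
    D.walk p f (n+1) v = D.walk p f n (D.succ v (f (σ.get j))) := by
  simp [OBDD.walk, h, hj]

theorem OBDD.walk_stop' (p : ℕ) (f : Var → Bool) (n : ℕ) (v : Fin D.size)
    (j : Fin σ.length) (h : D.label v = .inl j) (hj : ¬ j.1 < p) :
    D.walk p f (n+1) v = v := by
  simp [OBDD.walk, h, hj]

theorem OBDD.evalAux_const (f : Var → Bool) (m : ℕ) (v : Fin D.size) (b : Bool)
    (h : D.label v = .inr b) : D.evalAux f m v = b := by
  cases m <;> simp [OBDD.evalAux, h]

theorem OBDD.evalAux_stable (f : Var → Bool) :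
    ∀ n m (v : Fin D.size), (∀ k, D.label v = .inl k → σ.length ≤ k.1 + n) →
      (∀ k, D.label v = .inl k → σ.length ≤ k.1 + m) →
      D.evalAux f n v = D.evalAux f m v := by
  intro n
  induction n with
  | zero =>
    intro m v hn _
    cases h : D.label v with
    | inr b => rw [D.evalAux_const f m v b h, D.evalAux_const f 0 v b h]
    | inl k => exact absurd (hn k h) (by have := k.isLt; omega)
  | succ n ih =>
    intro m v hn hm
    cases h : D.label v with
    | inr b => rw [D.evalAux_const f m v b h, D.evalAux_const f _ v b h]
    | inl k =>
      cases m with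
      | zero => exact absurd (hm k h) (by have := k.isLt; omega)
      | succ m =>
        simp only [OBDD.evalAux, h]
        apply ih
        · intro k' hk'
          have := D.ordered v k h _ k' hk'
          have := hn k h
          omega
        · intro k' hk'
          have := D.ordered v k h _ k' hk'
          have := hm k h
          omega

theorem OBDD.evalAux_stable' (f : Var → Bool) (n m : ℕ) (v : Fin D.size)
    (hn : σ.length ≤ n) (hm : σ.length ≤ m) :
    D.evalAux f n v = D.evalAux f m v :=
  D.evalAux_stable f n m v (fun _ _ => by omega) (fun _ _ => by omega)

theorem OBDD.evalAux_congr (t : ℕ) (f g : Var → Bool)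
    (hfg : ∀ j : Fin σ.length, t ≤ j.1 → f (σ.get j) = g (σ.get j)) :
    ∀ n (v : Fin D.size), (∀ k, D.label v = .inl k → t ≤ k.1) →
      D.evalAux f n v = D.evalAux g n v := by
  intro n
  induction n with
  | zero => intro v _; cases h : D.label v <;> simp [OBDD.evalAux, h]
  | succ n ih =>
    intro v hv
    cases h : D.label v with
    | inr b => simp [OBDD.evalAux, h]
    | inl k =>
      simp only [OBDD.evalAux, h]
      rw [hfg k (hv k h)]
      apply ih
      intro k' hk'
      have := D.ordered v k h _ k' hk'
      have := hv k h
      omega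

theorem OBDD.walk_congr (p : ℕ) (f g : Var → Bool)
    (hfg : ∀ j : Fin σ.length, j.1 < p → f (σ.get j) = g (σ.get j)) :
    ∀ n (v : Fin D.size), D.walk p f n v = D.walk p g n v := by
  intro n
  induction n with
  | zero => intro v; rfl
  | succ n ih =>
    intro v
    cases h : D.label v with
    | inr b => rw [D.walk_stop p f n v b h, D.walk_stop p g n v b h]
    | inl k =>
      by_cases hk : k.1 < p
      · rw [D.walk_step p f n v k h hk, D.walk_step p g n v k h hk, hfg k hk]
        exact ih _
      · rw [D.walk_stop' p f n v k h hk, D.walk_stop' p g n v k h hk]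

theorem OBDD.walk_label (p : ℕ) (f : Var → Bool) :
    ∀ n (v : Fin D.size) (j : Fin σ.length),
      D.label (D.walk p f n v) = .inl j → j.1 < p →
      ∃ k : Fin σ.length, D.label v = .inl k ∧ k.1 + n ≤ j.1 := by
  intro n
  induction n with
  | zero => intro v j hj _; exact ⟨j, hj, by omega⟩
  | succ n ih =>
    intro v j hj hjp
    cases h : D.label v with
    | inr b =>
      rw [D.walk_stop p f n v b h, h] at hj
      exact absurd hj (by simp)
    | inl k =>
      by_cases hk : k.1 < p
      · rw [D.walk_step p f n v k h hk] at hj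
        obtain ⟨k', hk', hle⟩ := ih _ j hj hjp
        have := D.ordered v k h _ k' hk'
        exact ⟨k, rfl, by omega⟩
      · rw [D.walk_stop' p f n v k h hk, h] at hj
        injection hj with hj'
        cases hj'
        exact absurd hjp hk

theorem OBDD.evalAux_walk (p : ℕ) (f : Var → Bool) :
    ∀ n m (v : Fin D.size), σ.length ≤ m →
      D.evalAux f (n+m) v = D.evalAux f m (D.walk p f n v) := by
  intro n
  induction n with
  | zero => intro m v _; rw [Nat.zero_add]; rfl
  | succ n ih =>
    intro m v hm
    cases h : D.label v with
    | inr b =>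
      rw [D.walk_stop p f n v b h]
      exact D.evalAux_stable' f _ m v (by omega) hm
    | inl k =>
      by_cases hk : k.1 < p
      · rw [D.walk_step p f n v k h hk, show n+1+m = (n+m)+1 by omega]
        simp only [OBDD.evalAux, h]
        exact ih m _ hm
      · rw [D.walk_stop' p f n v k h hk]
        exact D.evalAux_stable' f _ m v (by omega) hm

/-- The node reached after reading the prefix of length p. -/
def OBDD.profile (p : ℕ) (f : Var → Bool) : Fin D.size :=
  D.walk p f (σ.length + 1) D.source

theorem OBDD.profile_label (p : ℕ) (f : Var → Bool) (j : Fin σ.length)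
    (hj : D.label (D.profile p f) = .inl j) : p ≤ j.1 := by
  by_contra hlt
  obtain ⟨k, _, hle⟩ := D.walk_label p f (σ.length + 1) D.source j hj (by omega)
  have := j.isLt
  omega

theorem OBDD.eval_profile (p : ℕ) (f : Var → Bool) :
    D.eval f = D.evalAux f (σ.length + 1) (D.profile p f) := by
  have h1 : D.eval f = D.evalAux f ((σ.length+1) + (σ.length+1)) D.source :=
    D.evalAux_stable' f _ _ _ (by omega) (by omega)
  rw [h1, D.evalAux_walk p f (σ.length+1) (σ.length+1) D.source (by omega)]
  rfl

end OBDDLemmas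
def xassign {e : ℕ} (a : Fin e → Var) (S : Finset (Fin e)) : Var → Bool :=
  fun v => decide (∀ j, a j = v → j ∈ S)

def yassign {e : ℕ} (a u : Fin e → Var) (S : Finset (Fin e)) (i : Fin e) : Var → Bool :=
  Function.update (xassign a S) (u i) false

theorem yassign_false_iff {e : ℕ} (a u : Fin e → Var) (S : Finset (Fin e)) (i : Fin e)
    (z : Var) (hz : yassign a u S i z = false) :
    z = u i ∨ ∃ j, a j = z ∧ j ∉ S := by
  by_cases h : z = u i
  · exact Or.inl h
  · right
    rw [yassign, Function.update_of_ne h, xassign] at hz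
    simpa using hz

theorem sat_yassign {e : ℕ} (Eg : Finset (Finset Var)) (F : CNF)
    (hF : F = Eg.image (fun ed => ed.image (fun v => (v, true))))
    (hc2 : ∀ ed ∈ Eg, ed.card = 2)
    (a u : Fin e → Var)
    (hAA : ∀ i j : Fin e, i ≠ j → ({a i, a j} : Finset Var) ∉ Eg)
    (hAU : ∀ i j : Fin e, i ≠ j → ({a j, u i} : Finset Var) ∉ Eg)
    (S : Finset (Fin e)) (i : Fin e) (hiS : i ∈ S) :
    satCNF F (yassign a u S i) := by
  intro c hc
  rw [hF, Finset.mem_image] at hc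
  obtain ⟨ed, hed, rfl⟩ := hc
  obtain ⟨v, w, hvw, rfl⟩ := Finset.card_eq_two.mp (hc2 ed hed)
  by_cases hv : yassign a u S i v = true
  · exact ⟨(v, true), Finset.mem_image_of_mem _ (Finset.mem_insert_self _ _), hv⟩
  by_cases hw : yassign a u S i w = true
  · exact ⟨(w, true), Finset.mem_image_of_mem _ (by simp), hw⟩
  exfalso
  have hv' := yassign_false_iff a u S i v (Bool.not_eq_true _ ▸ hv)
  have hw' := yassign_false_iff a u S i w (Bool.not_eq_true _ ▸ hw)
  rcases hv' with rfl | ⟨j, rfl, hj⟩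
  · rcases hw' with rfl | ⟨k, rfl, hk⟩
    · exact hvw rfl
    · have hki : k ≠ i := fun h => absurd hiS (h ▸ hk)
      exact hAU i k (fun h => hki h.symm) (by rwa [Finset.pair_comm] at hed)
  · rcases hw' with rfl | ⟨k, rfl, hk⟩
    · have hji : j ≠ i := fun h => absurd hiS (h ▸ hj)
      exact hAU i j (fun h => hji h.symm) hed
    · have hjk : j ≠ k := fun h => hvw (congrArg a h)
      exact hAA j k hjk hed

theorem unsat_yassign {e : ℕ} (Eg : Finset (Finset Var)) (F : CNF)
    (hF : F = Eg.image (fun ed => ed.image (fun v => (v, true))))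
    (a u : Fin e → Var)
    (hedge : ∀ i, ({a i, u i} : Finset Var) ∈ Eg)
    (hneq : ∀ i, a i ≠ u i)
    (S : Finset (Fin e)) (i : Fin e) (hiS : i ∉ S) :
    ¬ satCNF F (yassign a u S i) := by
  intro hsat
  have hC : ({(a i, true), (u i, true)} : Clause) ∈ F := by
    rw [hF, Finset.mem_image]
    exact ⟨{a i, u i}, hedge i, by simp [Finset.image_insert]⟩
  obtain ⟨l, hl, hfl⟩ := hsat _ hC
  simp only [Finset.mem_insert, Finset.mem_singleton] at hl
  rcases hl with rfl | rfl
  · simp only at hfl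
    rw [yassign, Function.update_of_ne (hneq i), xassign] at hfl
    rw [decide_eq_true_iff] at hfl
    exact hiS (hfl i rfl)
  · simp only at hfl
    rw [yassign, Function.update_self] at hfl
    exact Bool.false_ne_true hfl
theorem mem_take_toFinset {σ : List Var} (p : ℕ) (j : Fin σ.length) (hj : j.1 < p) :
    σ.get j ∈ (σ.take p).toFinset := by
  rw [List.mem_toFinset]
  have hlt : j.1 < (σ.take p).length := by simp [List.length_take]; omega
  have : (σ.take p)[j.1] = σ[j.1] := List.getElem_take
  rw [show σ.get j = (σ.take p)[j.1] from by rw [this]; simp]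
  exact List.getElem_mem _
theorem not_mem_take_toFinset {σ : List Var} (hnd : σ.Nodup) (p : ℕ) (j : Fin σ.length)
    (hj : p ≤ j.1) : σ.get j ∉ (σ.take p).toFinset := by
  rw [List.mem_toFinset]
  intro hmem
  obtain ⟨k, hk, hkj⟩ := List.mem_iff_getElem.mp hmem
  have hk' : k < p := by simp [List.length_take] at hk; omega
  have hk'' : k < σ.length := lt_of_lt_of_le hk' (by
    have := j.isLt; omega)
  rw [List.getElem_take] at hkj
  have := (List.Nodup.getElem_inj_iff hnd).mp hkj
  omega

theorem obdd_size_ge {σ : List Var} (hnd : σ.Nodup) (D : OBDD σ) (F : CNF)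
    (hD : D.computes F) (p : ℕ) {e : ℕ} (a u : Fin e → Var)
    (haP : ∀ i, a i ∈ (σ.take p).toFinset)
    (huP : ∀ i, u i ∉ (σ.take p).toFinset)
    (hsat : ∀ (S : Finset (Fin e)) i, i ∈ S → satCNF F (yassign a u S i))
    (hunsat : ∀ (S : Finset (Fin e)) i, i ∉ S → ¬ satCNF F (yassign a u S i)) :
    2 ^ e ≤ D.size := by
  -- profiles of y and x agree
  have hyx : ∀ (R : Finset (Fin e)) (i : Fin e),
      D.profile p (yassign a u R i) = D.profile p (xassign a R) := by
    intro R i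
    apply D.walk_congr
    intro j hj
    have hne : σ.get j ≠ u i := fun h => huP i (h ▸ mem_take_toFinset p j hj)
    rw [yassign, Function.update_of_ne hne]
  have key : ∀ (S T : Finset (Fin e)) (i : Fin e), i ∈ S → i ∉ T →
      D.profile p (xassign a S) = D.profile p (xassign a T) → False := by
    intro S T i hiS hiT hprof
    set yS := yassign a u S i with hyS
    set yT := yassign a u T i with hyT
    have hveq : D.profile p yS = D.profile p yT := by
      rw [hyx S i, hyx T i, hprof]
    have hagree : ∀ j : Fin σ.length, p ≤ j.1 → yS (σ.get j) = yT (σ.get j) := by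
      intro j hj
      have hz := not_mem_take_toFinset hnd p j hj
      set z := σ.get j
      by_cases hzu : z = u i
      · rw [hyS, hyT, yassign, yassign, hzu, Function.update_self, Function.update_self]
      · have hza : ∀ k, a k ≠ z := fun k h => hz (h ▸ haP k)
        rw [hyS, hyT, yassign, yassign, Function.update_of_ne hzu,
          Function.update_of_ne hzu, xassign, xassign]
        have h1 : (∀ k, a k = z → k ∈ S) := fun k h => absurd h (hza k)
        have h2 : (∀ k, a k = z → k ∈ T) := fun k h => absurd h (hza k)
        simp only [decide_eq_decide]
        exact iff_of_true h1 h2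
    have heval : D.eval yS = D.eval yT := by
      rw [D.eval_profile p yS, D.eval_profile p yT, ← hveq]
      exact D.evalAux_congr p yS yT hagree _ _ (fun k hk => D.profile_label p yS k hk)
    have h1 : D.eval yS = true := (hD yS).mpr (hsat S i hiS)
    have h2 : D.eval yT = true := heval ▸ h1
    exact hunsat T i hiT ((hD yT).mp h2)
  have hinj : Function.Injective (fun S : Finset (Fin e) => D.profile p (xassign a S)) := by
    intro S T h
    by_contra hne
    have : ∃ i, ¬ (i ∈ S ↔ i ∈ T) := by
      by_contra hall
      push_neg at hall
      exact hne (Finset.ext fun i => hall i)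
    obtain ⟨i, hi⟩ := this
    rw [iff_iff_implies_and_implies, not_and_or] at hi
    rcases hi with hi | hi
    · push_neg at hi
      exact key S T i hi.1 hi.2 h
    · push_neg at hi
      exact key T S i hi.1 hi.2 h.symm
  calc 2 ^ e = Fintype.card (Finset (Fin e)) := by simp [Fintype.card_finset]
    _ ≤ Fintype.card (Fin D.size) := Fintype.card_le_of_injective _ hinj
    _ = D.size := Fintype.card_fin _
theorem obdd_size_two {σ : List Var} (D : OBDD σ) (F : CNF) (hD : D.computes F)
    (f1 f2 : Var → Bool) (h1 : satCNF F f1) (h2 : ¬ satCNF F f2) : 2 ≤ D.size := by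
  by_contra h
  push_neg at h
  have hs : D.size = 0 ∨ D.size = 1 := by omega
  rcases hs with hs | hs
  · have := D.source.isLt; omega
  · cases hl : D.label D.source with
    | inl k =>
      have hsub : Subsingleton (Fin D.size) := by rw [hs]; infer_instance
      have hsucc : D.succ D.source true = D.source := Subsingleton.elim _ _
      have := D.ordered D.source k hl true k (by rw [hsucc]; exact hl)
      exact absurd this (lt_irrefl _)
    | inr b =>
      have e1 : D.eval f1 = b := D.evalAux_const f1 _ D.source b hl
      have e2 : D.eval f2 = b := D.evalAux_const f2 _ D.source b hl
      have hb : b = true := by rw [← e1]; exact (hD f1).mpr h1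
      exact h2 ((hD f2).mp (by rw [e2, hb]))

theorem greedy_indep (K : ℕ) (dconf : Var → Var → Prop) [DecidableRel dconf] :
    ∀ (S : Finset Var), (∀ v ∈ S, (S.filter (dconf v)).card ≤ K) →
    ∃ T ⊆ S, (∀ v ∈ T, ∀ w ∈ T, v ≠ w → ¬ dconf v w) ∧ S.card ≤ (2*K+1) * T.card := by
  intro S
  induction S using Finset.strongInductionOn with
  | _ S ih =>
    intro hK
    rcases S.eq_empty_or_nonempty with rfl | hne
    · exact ⟨∅, Finset.Subset.refl _, by simp, by simp⟩
    · -- find a vertex of small conflict degree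
      have hex : ∃ v ∈ S, (S.filter (fun w => dconf v w ∨ dconf w v)).card ≤ 2*K := by
        by_contra hall
        push_neg at hall
        have hsum1 : (2*K+1) * S.card ≤
            ∑ v ∈ S, (S.filter (fun w => dconf v w ∨ dconf w v)).card := by
          calc (2*K+1) * S.card = ∑ _v ∈ S, (2*K+1) := by
                rw [Finset.sum_const, smul_eq_mul, mul_comm]
            _ ≤ _ := Finset.sum_le_sum (fun v hv => hall v hv)
        have hsum2 : ∀ v ∈ S, (S.filter (fun w => dconf v w ∨ dconf w v)).card ≤
            (S.filter (fun w => dconf v w)).card + (S.filter (fun w => dconf w v)).card := by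
          intro v _
          rw [Finset.filter_or]
          exact Finset.card_union_le _ _
        have hswap : ∑ v ∈ S, (S.filter (fun w => dconf w v)).card
            = ∑ v ∈ S, (S.filter (fun w => dconf v w)).card := by
          simp only [Finset.card_filter]
          rw [Finset.sum_comm]
        have hub : ∑ v ∈ S, (S.filter (fun w => dconf v w ∨ dconf w v)).card
            ≤ 2*K * S.card := by
          calc ∑ v ∈ S, (S.filter (fun w => dconf v w ∨ dconf w v)).card
              ≤ ∑ v ∈ S, ((S.filter (fun w => dconf v w)).card
                + (S.filter (fun w => dconf w v)).card) :=
                Finset.sum_le_sum hsum2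
            _ = ∑ v ∈ S, (S.filter (fun w => dconf v w)).card
                + ∑ v ∈ S, (S.filter (fun w => dconf w v)).card := Finset.sum_add_distrib
            _ = 2 * ∑ v ∈ S, (S.filter (fun w => dconf v w)).card := by rw [hswap]; ring
            _ ≤ 2 * (K * S.card) := by
                have : ∑ v ∈ S, (S.filter (fun w => dconf v w)).card ≤ K * S.card := by
                  calc ∑ v ∈ S, (S.filter (fun w => dconf v w)).card
                      ≤ ∑ _v ∈ S, K := Finset.sum_le_sum hK
                    _ = K * S.card := by rw [Finset.sum_const, smul_eq_mul, mul_comm]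
                omega
            _ = 2*K * S.card := by ring
        have hpos : 1 ≤ S.card := Finset.card_pos.mpr hne
        have hcontra := le_trans hsum1 hub
        nlinarith
      obtain ⟨v, hv, hvdeg⟩ := hex
      set R := insert v (S.filter (fun w => dconf v w ∨ dconf w v)) with hR
      set S' := S \ R with hS'
      have hvR : v ∈ R := Finset.mem_insert_self _ _
      have hS'sub : S' ⊆ S := Finset.sdiff_subset
      have hssub : S' ⊂ S := Finset.ssubset_iff_of_subset hS'sub |>.mpr
        ⟨v, hv, by simp [hS', hvR]⟩
      obtain ⟨T', hT'sub, hT'indep, hT'card⟩ := ih S' hssub (fun w hw =>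
        le_trans (Finset.card_le_card (Finset.filter_subset_filter _ hS'sub)) (hK w (hS'sub hw)))
      have hvT' : v ∉ T' := fun h => (Finset.mem_sdiff.mp (hT'sub h)).2 hvR
      refine ⟨insert v T', ?_, ?_, ?_⟩
      · intro w hw
        rcases Finset.mem_insert.mp hw with rfl | hw
        · exact hv
        · exact hS'sub (hT'sub hw)
      · intro x hx y hy hxy
        have hnotconf : ∀ w ∈ T', ¬ (dconf v w ∨ dconf w v) := by
          intro w hw
          have hwS' : w ∈ S' := hT'sub hw
          rw [hS', Finset.mem_sdiff] at hwS'
          intro hcon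
          exact hwS'.2 (by
            rw [hR]
            exact Finset.mem_insert_of_mem (Finset.mem_filter.mpr ⟨hwS'.1, hcon⟩))
        rcases Finset.mem_insert.mp hx with hxv | hxT
        · rcases Finset.mem_insert.mp hy with hyv | hyT
          · exact absurd (hxv.trans hyv.symm) hxy
          · subst hxv; exact fun hc => hnotconf y hyT (Or.inl hc)
        · rcases Finset.mem_insert.mp hy with hyv | hyT
          · subst hyv; exact fun hc => hnotconf x hxT (Or.inr hc)
          · exact hT'indep x hxT y hyT hxy
      · have hRcard : R.card ≤ 2*K + 1 := by
          calc R.card ≤ (S.filter (fun w => dconf v w ∨ dconf w v)).card + 1 :=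
              Finset.card_insert_le _ _
            _ ≤ 2*K + 1 := by omega
        have hsplit : S.card ≤ S'.card + R.card := by
          have h1 : S ⊆ S' ∪ R := by
            intro x hx
            by_cases hxR : x ∈ R
            · exact Finset.mem_union_right _ hxR
            · exact Finset.mem_union_left _ (Finset.mem_sdiff.mpr ⟨hx, hxR⟩)
          calc S.card ≤ (S' ∪ R).card := Finset.card_le_card h1
            _ ≤ S'.card + R.card := Finset.card_union_le _ _
        have hTcard : (insert v T').card = T'.card + 1 := Finset.card_insert_of_notMem hvT'
        calc S.card ≤ S'.card + R.card := hsplit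
          _ ≤ (2*K+1) * T'.card + (2*K+1) := by omega
          _ = (2*K+1) * (T'.card + 1) := by ring
          _ = (2*K+1) * (insert v T').card := by rw [hTcard]

theorem filter_pair_card_le (Eg : Finset (Finset Var)) (d : ℕ)
    (hc2 : ∀ ed ∈ Eg, ed.card = 2)
    (S : Finset Var) (z : Var)
    (hdeg : (Eg.filter (fun ed => z ∈ ed)).card ≤ d) :
    (S.filter (fun v => ({v, z} : Finset Var) ∈ Eg)).card ≤ d := by
  have hinj : Set.InjOn (fun v => ({v, z} : Finset Var))
      (S.filter (fun v => ({v, z} : Finset Var) ∈ Eg)) := by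
    intro v1 hv1 v2 hv2 h
    simp only [Finset.coe_filter, Set.mem_setOf_eq] at hv1 hv2
    have hv1z : v1 ≠ z := by
      intro rfl'
      have := hc2 _ hv1.2
      rw [rfl'] at this
      simp at this
    have h' : ({v1, z} : Finset Var) = {v2, z} := h
    have : v1 ∈ ({v2, z} : Finset Var) := by
      rw [← h']; exact Finset.mem_insert_self v1 {z}
    rcases Finset.mem_insert.mp this with h' | h'
    · exact h'
    · exact absurd (Finset.mem_singleton.mp h') hv1z
  calc (S.filter (fun v => ({v, z} : Finset Var) ∈ Eg)).card
      ≤ (Eg.filter (fun ed => z ∈ ed)).card := by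
        apply Finset.card_le_card_of_injOn _ _ hinj
        intro v hv
        rw [Finset.mem_coe, Finset.mem_filter] at hv ⊢
        exact ⟨hv.2, by simp⟩
    _ ≤ d := hdeg
theorem varsClause_image_edge (ed : Finset Var) :
    varsClause (ed.image (fun v => (v, true))) = ed := by
  rw [varsClause, Finset.image_image]
  exact Finset.image_id

theorem varsCNF_graph (Eg : Finset (Finset Var)) :
    varsCNF (Eg.image (fun ed => ed.image (fun v => (v, true)))) = verts Eg := by
  rw [varsCNF, Finset.sup_image, verts]
  apply Finset.sup_congr rfl
  intro ed _
  exact varsClause_image_edge ed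

theorem sizeCNF_graph (Eg : Finset (Finset Var)) (hc2 : ∀ ed ∈ Eg, ed.card = 2) :
    sizeCNF (Eg.image (fun ed => ed.image (fun v => (v, true)))) = 2 * Eg.card := by
  rw [sizeCNF, Finset.sum_image (fun e1 h1 e2 h2 h => by
    have := congrArg varsClause h
    rwa [varsClause_image_edge, varsClause_image_edge] at this)]
  calc ∑ ed ∈ Eg, (ed.image (fun v => (v, true))).card
      = ∑ ed ∈ Eg, 2 := Finset.sum_congr rfl (fun ed hed => by
        rw [Finset.card_image_of_injective _ (fun v w h => (Prod.mk.injEq _ _ _ _).mp h |>.1)]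
        exact hc2 ed hed)
    _ = 2 * Eg.card := by rw [Finset.sum_const, smul_eq_mul, mul_comm]

theorem edge_subset_verts (Eg : Finset (Finset Var)) (ed : Finset Var) (hed : ed ∈ Eg) :
    ed ⊆ verts Eg := Finset.le_sup (f := id) hed

theorem handshake (Eg : Finset (Finset Var)) (n d : ℕ)
    (hc2 : ∀ ed ∈ Eg, ed.card = 2)
    (hcard : (verts Eg).card = n)
    (hdeg : ∀ v ∈ verts Eg, (Eg.filter (fun e => v ∈ e)).card ≤ d) :
    2 * Eg.card ≤ d * n := by
  have h1 : ∑ ed ∈ Eg, ed.card = ∑ ed ∈ Eg, ((verts Eg).filter (fun v => v ∈ ed)).card := by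
    apply Finset.sum_congr rfl
    intro ed hed
    congr 1
    rw [Finset.filter_mem_eq_inter, Finset.inter_eq_right.mpr (edge_subset_verts Eg ed hed)]
  have h2 : ∑ ed ∈ Eg, ((verts Eg).filter (fun v => v ∈ ed)).card
      = ∑ v ∈ verts Eg, (Eg.filter (fun e => v ∈ e)).card := by
    simp only [Finset.card_filter]
    rw [Finset.sum_comm]
  calc 2 * Eg.card = ∑ _ed ∈ Eg, 2 := by rw [Finset.sum_const, smul_eq_mul, mul_comm]
    _ = ∑ ed ∈ Eg, ed.card := Finset.sum_congr rfl (fun ed hed => (hc2 ed hed).symm)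
    _ = ∑ v ∈ verts Eg, (Eg.filter (fun e => v ∈ e)).card := by rw [h1, h2]
    _ ≤ ∑ _v ∈ verts Eg, d := Finset.sum_le_sum hdeg
    _ = d * n := by rw [Finset.sum_const, smul_eq_mul, mul_comm, hcard]

/-- the graph CNF F of an (n,d,a)-expander (n ≥ 2, d ≥ 3, a > 0) has OBDD
size at least 2^(c·size(F)) where c = min{1,a}/(16d²): every OBDD computing F has at
least that many nodes. -/
theorem expander_obdd_lower_bound (Eg : Finset (Finset Var)) (n d : ℕ) (a : ℝ)
    (hexp : IsExpander Eg n d a) (hn : 2 ≤ n) (hd : 3 ≤ d) (ha : 0 < a)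
    (F : CNF) (hF : F = Eg.image (fun e => e.image (fun v => (v, true))))
    (σ : List Var) (hnd : σ.Nodup) (hv : σ.toFinset = varsCNF F)
    (D : OBDD σ) (hD : D.computes F) :
    (2 : ℝ) ^ ((min 1 a / (16 * (d : ℝ) ^ 2)) * (sizeCNF F : ℝ)) ≤ (D.size : ℝ) := by
  classical
  obtain ⟨hcard, hc2, hdeg, hexpand⟩ := hexp
  set m : ℝ := min 1 a with hm
  have hm0 : 0 < m := lt_min one_pos ha
  have hm1 : m ≤ 1 := min_le_left _ _
  have hma : m ≤ a := min_le_right _ _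
  have hd0 : (0:ℝ) < d := by
    have : (0:ℕ) < d := by omega
    exact_mod_cast this
  -- basic facts
  have hvars : varsCNF F = verts Eg := by rw [hF]; exact varsCNF_graph Eg
  have hlen : σ.length = n := by
    rw [← List.toFinset_card_of_nodup hnd, hv, hvars, hcard]
  have hsize : sizeCNF F = 2 * Eg.card := by rw [hF]; exact sizeCNF_graph Eg hc2
  have hhand : 2 * Eg.card ≤ d * n := handshake Eg n d hc2 hcard hdeg
  -- D.size ≥ 2
  have hsat1 : satCNF F (fun _ => true) := by
    intro c hc
    rw [hF, Finset.mem_image] at hc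
    obtain ⟨ed, hed, rfl⟩ := hc
    have : ed.Nonempty := Finset.card_pos.mp (by rw [hc2 ed hed]; omega)
    obtain ⟨w, hw⟩ := this
    exact ⟨(w, true), Finset.mem_image_of_mem _ hw, rfl⟩
  have hsat2 : ¬ satCNF F (fun _ => false) := by
    intro hsat
    have hvne : (verts Eg).Nonempty := Finset.card_pos.mp (by omega)
    obtain ⟨w, hw⟩ := hvne
    obtain ⟨ed, hed, hwed⟩ := Finset.mem_sup.mp hw
    have hC : ed.image (fun v => (v, true)) ∈ F := by
      rw [hF]; exact Finset.mem_image_of_mem _ hed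
    obtain ⟨l, hl, hfl⟩ := hsat _ hC
    obtain ⟨w', _, rfl⟩ := Finset.mem_image.mp hl
    exact Bool.false_ne_true hfl
  have hD2 : 2 ≤ D.size := obdd_size_two D F hD _ _ hsat1 hsat2
  have hsizedn : (sizeCNF F : ℝ) ≤ (d : ℝ) * n := by
    rw [hsize]
    exact_mod_cast hhand
  have h2d2 : (0:ℝ) < 16 * (d:ℝ)^2 := by positivity
  by_cases hcase : m * n ≤ 16 * d
  · -- small case: exponent at most 1
    have hE1 : (m / (16 * (d : ℝ) ^ 2)) * (sizeCNF F : ℝ) ≤ 1 := by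
      rw [div_mul_eq_mul_div, div_le_one h2d2]
      calc m * (sizeCNF F : ℝ) ≤ m * ((d:ℝ) * n) := by
            apply mul_le_mul_of_nonneg_left hsizedn (le_of_lt hm0)
        _ = (d:ℝ) * (m * n) := by ring
        _ ≤ (d:ℝ) * (16 * d) := by
            apply mul_le_mul_of_nonneg_left hcase (le_of_lt hd0)
        _ = 16 * (d:ℝ)^2 := by ring
    calc (2 : ℝ) ^ ((m / (16 * (d : ℝ) ^ 2)) * (sizeCNF F : ℝ))
        ≤ (2:ℝ) ^ (1:ℝ) := Real.rpow_le_rpow_of_exponent_le (by norm_num) hE1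
      _ = 2 := Real.rpow_one 2
      _ ≤ (D.size : ℝ) := by exact_mod_cast hD2
  · -- main case
    push_neg at hcase
    have hmn48 : (48:ℝ) ≤ m * n := by
      have : (48:ℝ) ≤ 16 * d := by
        have : (3:ℝ) ≤ d := by exact_mod_cast hd
        linarith
      linarith
    set p : ℕ := n / 2 with hp
    have hpn : p ≤ σ.length := by omega
    set P : Finset Var := (σ.take p).toFinset with hP
    have hPcard : P.card = p := by
      rw [hP, List.toFinset_card_of_nodup (hnd.sublist (List.take_sublist p σ)),
        List.length_take]
      omega
    have hPsub : P ⊆ verts Eg := by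
      intro x hx
      rw [hP, List.mem_toFinset] at hx
      have : x ∈ σ := List.mem_of_mem_take hx
      rw [← hvars, ← hv]
      exact List.mem_toFinset.mpr this
    set Q : Finset Var := verts Eg \ P with hQ
    have hQcard : Q.card = n - p := by
      rw [hQ, Finset.card_sdiff_of_subset hPsub, hPcard, hcard]
    obtain ⟨W, hWQ, hWcard⟩ := Finset.exists_subset_card_eq (s := Q) (n := p) (by omega)
    have hWsub : W ⊆ verts Eg := hWQ.trans Finset.sdiff_subset
    have hWhalf : (W.card : ℝ) ≤ (n : ℝ) / 2 := by
      rw [hWcard]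
      calc ((p:ℕ) : ℝ) = ((n/2 : ℕ) : ℝ) := by rw [hp]
        _ ≤ (n:ℝ)/2 := Nat.cast_div_le
    have haW : a * W.card ≤ ((nbhd Eg W).card : ℝ) := hexpand W hWsub hWhalf
    set A0 : Finset Var := (nbhd Eg W) ∩ P with hA0
    have hA0P : A0 ⊆ P := Finset.inter_subset_right
    have hA0nbhd : A0 ⊆ nbhd Eg W := Finset.inter_subset_left
    have hA0verts : A0 ⊆ verts Eg := hA0P.trans hPsub
    have hnbhdsub : nbhd Eg W ⊆ A0 ∪ (Q \ W) := by
      intro x hx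
      have hx' : x ∈ verts Eg ∧ (x ∉ W ∧ ∃ w ∈ W, ({x, w} : Finset Var) ∈ Eg) :=
        Finset.mem_filter.mp hx
      by_cases hxP : x ∈ P
      · exact Finset.mem_union_left _ (Finset.mem_inter.mpr ⟨hx, hxP⟩)
      · exact Finset.mem_union_right _ (Finset.mem_sdiff.mpr
          ⟨Finset.mem_sdiff.mpr ⟨hx'.1, hxP⟩, hx'.2.1⟩)
    have hQWcard : (Q \ W).card ≤ 1 := by
      rw [Finset.card_sdiff_of_subset hWQ, hQcard, hWcard]
      omega
    have hnbhdcard : ((nbhd Eg W).card : ℝ) ≤ (A0.card : ℝ) + 1 := by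
      have h1 : (nbhd Eg W).card ≤ A0.card + (Q \ W).card :=
        le_trans (Finset.card_le_card hnbhdsub) (Finset.card_union_le _ _)
      have h2 : (nbhd Eg W).card ≤ A0.card + 1 := by omega
      exact_mod_cast h2
    -- choice of partner in W
    set ψ : Var → Var := fun v =>
      if h : ∃ w, w ∈ W ∧ ({v, w} : Finset Var) ∈ Eg then h.choose else 0 with hψdef
    have hψ : ∀ v ∈ A0, ψ v ∈ W ∧ ({v, ψ v} : Finset Var) ∈ Eg := by
      intro v hv
      have hv' := Finset.mem_filter.mp (hA0nbhd hv)
      obtain ⟨w, hw, hwe⟩ := hv'.2.2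
      have hex : ∃ w, w ∈ W ∧ ({v, w} : Finset Var) ∈ Eg := ⟨w, hw, hwe⟩
      rw [hψdef]
      simp only [dif_pos hex]
      exact hex.choose_spec
    -- conflict relation and greedy independent set
    set dconf : Var → Var → Prop := fun v w =>
      v ≠ w ∧ (({v, w} : Finset Var) ∈ Eg ∨ ({w, ψ v} : Finset Var) ∈ Eg) with hdconf
    have hKbound : ∀ v ∈ A0, (A0.filter (dconf v)).card ≤ 2 * d := by
      intro v hv
      have hsub : A0.filter (dconf v) ⊆
          (A0.filter (fun w => ({w, v} : Finset Var) ∈ Eg)) ∪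
          (A0.filter (fun w => ({w, ψ v} : Finset Var) ∈ Eg)) := by
        intro w hw
        obtain ⟨hwA, hne, hor⟩ := Finset.mem_filter.mp hw
        rcases hor with h | h
        · exact Finset.mem_union_left _ (Finset.mem_filter.mpr
            ⟨hwA, by rwa [Finset.pair_comm]⟩)
        · exact Finset.mem_union_right _ (Finset.mem_filter.mpr ⟨hwA, h⟩)
      calc (A0.filter (dconf v)).card
          ≤ (A0.filter (fun w => ({w, v} : Finset Var) ∈ Eg)).card
            + (A0.filter (fun w => ({w, ψ v} : Finset Var) ∈ Eg)).card :=
            le_trans (Finset.card_le_card hsub) (Finset.card_union_le _ _)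
        _ ≤ d + d := by
            apply Nat.add_le_add
            · exact filter_pair_card_le Eg d hc2 A0 v (hdeg v (hA0verts hv))
            · exact filter_pair_card_le Eg d hc2 A0 (ψ v)
                (hdeg (ψ v) (hWsub (hψ v hv).1))
        _ = 2 * d := by omega
    obtain ⟨T, hTA0, hTindep, hTcard⟩ := greedy_indep (2*d) dconf A0 hKbound
    set e : ℕ := T.card with he
    set af : Fin e → Var := fun i => ((T.orderIsoOfFin rfl) i : Var) with haf
    have hafmem : ∀ i, af i ∈ T := fun i => ((T.orderIsoOfFin rfl) i).2
    have hafinj : Function.Injective af := fun i j h =>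
      (T.orderIsoOfFin rfl).injective (Subtype.ext h)
    set uf : Fin e → Var := fun i => ψ (af i) with huf
    have hafA0 : ∀ i, af i ∈ A0 := fun i => hTA0 (hafmem i)
    have hufW : ∀ i, uf i ∈ W := fun i => (hψ (af i) (hafA0 i)).1
    have hedge : ∀ i, ({af i, uf i} : Finset Var) ∈ Eg :=
      fun i => (hψ (af i) (hafA0 i)).2
    have hufP : ∀ i, uf i ∉ P := by
      intro i hmem
      have : uf i ∈ Q := hWQ (hufW i)
      exact (Finset.mem_sdiff.mp this).2 hmem
    have hneq : ∀ i, af i ≠ uf i := by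
      intro i h
      exact hufP i (h ▸ hA0P (hafA0 i))
    have hnoconf : ∀ i j : Fin e, i ≠ j →
        ({af i, af j} : Finset Var) ∉ Eg ∧ ({af j, uf i} : Finset Var) ∉ Eg := by
      intro i j hij
      have hne : af i ≠ af j := fun h => hij (hafinj h)
      have hnc := hTindep (af i) (hafmem i) (af j) (hafmem j) hne
      have hnc' : ¬(af i ≠ af j ∧ (({af i, af j} : Finset Var) ∈ Eg ∨
          ({af j, ψ (af i)} : Finset Var) ∈ Eg)) := hnc
      have hor : ¬(({af i, af j} : Finset Var) ∈ Eg ∨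
          ({af j, ψ (af i)} : Finset Var) ∈ Eg) := fun h => hnc' ⟨hne, h⟩
      exact ⟨fun h => hor (Or.inl h), fun h => hor (Or.inr h)⟩
    have hAA : ∀ i j : Fin e, i ≠ j → ({af i, af j} : Finset Var) ∉ Eg :=
      fun i j hij => (hnoconf i j hij).1
    have hAU : ∀ i j : Fin e, i ≠ j → ({af j, uf i} : Finset Var) ∉ Eg :=
      fun i j hij => (hnoconf i j hij).2
    -- apply the OBDD counting lemma
    have hsat : ∀ (S : Finset (Fin e)) i, i ∈ S → satCNF F (yassign af uf S i) :=
      fun S i hiS => sat_yassign Eg F hF hc2 af uf hAA hAU S i hiS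
    have hunsat : ∀ (S : Finset (Fin e)) i, i ∉ S → ¬ satCNF F (yassign af uf S i) :=
      fun S i hiS => unsat_yassign Eg F hF af uf hedge hneq S i hiS
    have h2e : 2 ^ e ≤ D.size :=
      obdd_size_ge hnd D F hD p af uf (fun i => hA0P (hafA0 i)) hufP hsat hunsat
    -- arithmetic
    have hpcast : ((n:ℝ) - 1) / 2 ≤ (p : ℝ) := by
      have h0 : n ≤ 2 * p + 1 := by omega
      have h' : (n:ℝ) ≤ 2 * (p:ℝ) + 1 := by exact_mod_cast h0
      linarith
    have hA0big : 15 * (m * n) ≤ 32 * (A0.card : ℝ) := by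
      have h3 : (W.card : ℝ) = p := by exact_mod_cast hWcard
      have h2 : m * (p:ℝ) ≤ a * (p:ℝ) :=
        mul_le_mul_of_nonneg_right hma (Nat.cast_nonneg _)
      rw [h3] at haW
      have h1 : m * (p:ℝ) - 1 ≤ (A0.card : ℝ) := by linarith [haW, hnbhdcard, h2]
      have hmp : m * (((n:ℝ) - 1)/2) ≤ m * (p:ℝ) :=
        mul_le_mul_of_nonneg_left hpcast hm0.le
      have hx : m * (((n:ℝ) - 1)/2) = (m * n - m)/2 := by ring
      linarith [h1, hmp, hx, hm1, hmn48]
    have hTbig : (A0.card : ℝ) ≤ 5 * d * e := by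
      have h1 : (A0.card : ℝ) ≤ (2*(2*d)+1) * (e:ℝ) := by exact_mod_cast hTcard
      have h2 : (2*(2*(d:ℝ))+1) ≤ 5 * d := by
        have : (3:ℝ) ≤ d := by exact_mod_cast hd
        linarith
      have h3 : (2*(2*(d:ℝ))+1) * (e:ℝ) ≤ 5 * d * (e:ℝ) :=
        mul_le_mul_of_nonneg_right h2 (Nat.cast_nonneg _)
      linarith
    have hmne : m * n ≤ 16 * d * e := by
      have hde : (0:ℝ) ≤ (d:ℝ) * (e:ℝ) := by positivity
      nlinarith [hA0big, hTbig, hde]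
    have hEe : (m / (16 * (d : ℝ) ^ 2)) * (sizeCNF F : ℝ) ≤ (e : ℝ) := by
      rw [div_mul_eq_mul_div, div_le_iff₀ h2d2]
      calc m * (sizeCNF F : ℝ) ≤ m * ((d:ℝ) * n) :=
            mul_le_mul_of_nonneg_left hsizedn (le_of_lt hm0)
        _ = (d:ℝ) * (m * n) := by ring
        _ ≤ (d:ℝ) * (16 * d * e) := mul_le_mul_of_nonneg_left hmne (le_of_lt hd0)
        _ = (e:ℝ) * (16 * (d:ℝ)^2) := by ring
    calc (2 : ℝ) ^ ((m / (16 * (d : ℝ) ^ 2)) * (sizeCNF F : ℝ))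
        ≤ (2:ℝ) ^ ((e:ℕ) : ℝ) := Real.rpow_le_rpow_of_exponent_le (by norm_num) hEe
      _ = ((2^e : ℕ) : ℝ) := by
          rw [Real.rpow_natCast]
          push_cast
          ring
      _ ≤ (D.size : ℝ) := by exact_mod_cast h2e
end

section
/- Let G = (V,E) be an (n,d,a)-expander with n ≥ 2, d ≥ 3, a > 0, and let S ⊆ V with |S| = ⌊n/2⌋. Then there exists a matching {a₁u₁, …, a_e u_e} in G with a_i ∈ S, u_i ∈ V∖S, e ≥ (min{1,a}/(8d))·n, such that for all i ≠ j, a_i a_j ∉ E and a_i u_j ∉ E. -/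
lemma mem_verts_of_edge {Eg : Finset (Finset Var)} {e : Finset Var} {v : Var}
    (he : e ∈ Eg) (hv : v ∈ e) : v ∈ verts Eg :=
  Finset.mem_sup.2 ⟨e, he, hv⟩

lemma mem_nbhd {Eg : Finset (Finset Var)} {W : Finset Var} {v : Var} :
    v ∈ nbhd Eg W ↔ v ∈ verts Eg ∧ v ∉ W ∧ ∃ w ∈ W, ({v, w} : Finset Var) ∈ Eg := by
  simp [nbhd]

lemma card_nbhd_single {Eg : Finset (Finset Var)} {d : ℕ}
    (hdeg : ∀ v ∈ verts Eg, (Eg.filter (fun e => v ∈ e)).card ≤ d) (v : Var) :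
    (nbhd Eg ({v} : Finset Var)).card ≤ d := by
  by_cases hv : v ∈ verts Eg
  · refine le_trans (Finset.card_le_card_of_injOn (fun w => ({w, v} : Finset Var))
      ?_ ?_) (hdeg v hv)
    · intro w hw
      rw [Finset.mem_coe, mem_nbhd] at hw
      obtain ⟨hw1, hw2, w', hw', hedge⟩ := hw
      simp only [Finset.mem_singleton] at hw'
      subst hw'
      simp only [Finset.mem_coe, Finset.mem_filter]
      exact ⟨hedge, by simp⟩
    · intro x hx y hy hxy
      rw [Finset.mem_coe, mem_nbhd] at hx
      rw [Finset.mem_coe, mem_nbhd] at hy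
      have hxv : x ≠ v := by simpa using hx.2.1
      have hxy' : ({x, v} : Finset Var) = ({y, v} : Finset Var) := hxy
      have hmem : x ∈ ({y, v} : Finset Var) := by
        rw [← hxy']; simp
      simp only [Finset.mem_insert, Finset.mem_singleton] at hmem
      tauto
  · have hempty : nbhd Eg ({v} : Finset Var) = ∅ := by
      rw [Finset.eq_empty_iff_forall_notMem]
      intro w hw
      rw [mem_nbhd] at hw
      obtain ⟨_, _, w', hw', hedge⟩ := hw
      simp only [Finset.mem_singleton] at hw'
      subst hw'
      exact hv (mem_verts_of_edge hedge (by simp))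
    simp [hempty]

/-- A "good" partial one-sidedly-induced matching from S into its complement. -/
def GoodM (Eg : Finset (Finset Var)) (S : Finset Var) (M : Finset (Var × Var)) : Prop :=
  (∀ p ∈ M, p.1 ∈ S ∧ p.2 ∈ verts Eg ∧ p.2 ∉ S ∧ ({p.1, p.2} : Finset Var) ∈ Eg) ∧
  (∀ p ∈ M, ∀ q ∈ M, p ≠ q → p.1 ≠ q.1 ∧ p.2 ≠ q.2 ∧
    ({p.1, q.1} : Finset Var) ∉ Eg ∧ ({p.1, q.2} : Finset Var) ∉ Eg)

set_option maxHeartbeats 1000000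

/-- in an (n,d,a)-expander with S a set of ⌊n/2⌋ vertices, there is a
matching a₁u₁,…,a_e u_e with aᵢ ∈ S, uᵢ ∉ S, of size e ≥ (min{1,a}/(8d))·n, such that
for i ≠ j neither aᵢaⱼ nor aᵢuⱼ is an edge. -/
theorem expander_one_sided_induced_matching (Eg : Finset (Finset Var)) (n d : ℕ) (a : ℝ)
    (hexp : IsExpander Eg n d a) (hn : 2 ≤ n) (hd : 3 ≤ d) (ha : 0 < a)
    (S : Finset Var) (hS : S ⊆ verts Eg) (hcard : S.card = n / 2) :
    ∃ e : ℕ, (min 1 a / (8 * d)) * n ≤ (e : ℝ) ∧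
      ∃ av uv : Fin e → Var,
        Function.Injective av ∧ Function.Injective uv ∧
        (∀ i j, av i ≠ uv j) ∧
        (∀ i, av i ∈ S) ∧ (∀ i, uv i ∈ verts Eg \ S) ∧
        (∀ i, ({av i, uv i} : Finset Var) ∈ Eg) ∧
        (∀ i j, i ≠ j →
          ({av i, av j} : Finset Var) ∉ Eg ∧ ({av i, uv j} : Finset Var) ∉ Eg) := by
  classical
  obtain ⟨hverts, hsize, hdeg, hexpand⟩ := hexp
  obtain ⟨d', rfl⟩ : ∃ d', d = d' + 1 := ⟨d - 1, by omega⟩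
  set a' : ℝ := min 1 a with ha'def
  have ha'pos : 0 < a' := lt_min one_pos ha
  have ha'le1 : a' ≤ 1 := min_le_left _ _
  have ha'lea : a' ≤ a := min_le_right _ _
  -- a maximal good matching
  set T : Finset (Finset (Var × Var)) :=
    ((verts Eg ×ˢ verts Eg).powerset).filter (GoodM Eg S) with hT
  have hTne : T.Nonempty := by
    refine ⟨∅, Finset.mem_filter.2 ⟨Finset.mem_powerset.2 (Finset.empty_subset _), ?_, ?_⟩⟩ <;>
      simp
  obtain ⟨M, hMT, hmax⟩ := Finset.exists_max_image T Finset.card hTne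
  rw [hT, Finset.mem_filter, Finset.mem_powerset] at hMT
  obtain ⟨hMsub, hM1, hM2⟩ := hMT
  set A := M.image Prod.fst with hA
  set U := M.image Prod.snd with hU
  set F := A ∪ nbhd Eg A ∪ nbhd Eg U with hF
  set W := S \ F with hW
  set e := M.card with he
  have hAsub : A ⊆ S := by
    intro x hx
    obtain ⟨p, hp, rfl⟩ := Finset.mem_image.1 hx
    exact (hM1 p hp).1
  have hUnotS : ∀ x ∈ U, x ∉ S := by
    intro x hx
    obtain ⟨p, hp, rfl⟩ := Finset.mem_image.1 hx
    exact (hM1 p hp).2.2.1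
  have hAcard : A.card ≤ e := Finset.card_image_le
  have hUcard : U.card ≤ e := Finset.card_image_le
  -- maximality: no extension possible
  have hext : ∀ w v : Var, w ∈ S → w ∉ F → v ∈ verts Eg → v ∉ S → v ∉ U →
      v ∉ nbhd Eg A → ({w, v} : Finset Var) ∈ Eg → False := by
    intro w v hwS hwF hvV hvS hvU hvNA hedge
    have hwV : w ∈ verts Eg := hS hwS
    have hwA : w ∉ A := fun h => hwF (Finset.mem_union_left _ (Finset.mem_union_left _ h))
    have hwNA : w ∉ nbhd Eg A := fun h =>
      hwF (Finset.mem_union_left _ (Finset.mem_union_right _ h))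
    have hwNU : w ∉ nbhd Eg U := fun h => hwF (Finset.mem_union_right _ h)
    have hwU : w ∉ U := fun h => hUnotS w h hwS
    have hvA : v ∉ A := fun h => hvS (hAsub h)
    have hnew : (w, v) ∉ M := fun h => hwA (Finset.mem_image_of_mem Prod.fst h)
    have hgood : GoodM Eg S (insert (w, v) M) := by
      constructor
      · intro p hp
        rcases Finset.mem_insert.1 hp with rfl | hp
        · exact ⟨hwS, hvV, hvS, hedge⟩
        · exact hM1 p hp
      · intro p hp q hq hpq
        rcases Finset.mem_insert.1 hp with rfl | hp <;>
          rcases Finset.mem_insert.1 hq with rfl | hq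
        · exact absurd rfl hpq
        · refine ⟨?_, ?_, ?_, ?_⟩
          · intro h
            have h' : w = q.1 := h
            exact hwA (h' ▸ Finset.mem_image_of_mem Prod.fst hq)
          · intro h
            have h' : v = q.2 := h
            exact hvU (h' ▸ Finset.mem_image_of_mem Prod.snd hq)
          · intro h
            exact hwNA (mem_nbhd.2 ⟨hwV, hwA, q.1, Finset.mem_image_of_mem _ hq, h⟩)
          · intro h
            exact hwNU (mem_nbhd.2 ⟨hwV, hwU, q.2, Finset.mem_image_of_mem _ hq, h⟩)
        · refine ⟨?_, ?_, ?_, ?_⟩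
          · intro h
            have h' : p.1 = w := h
            exact hwA (h' ▸ Finset.mem_image_of_mem Prod.fst hp)
          · intro h
            have h' : p.2 = v := h
            exact hvU (h' ▸ Finset.mem_image_of_mem Prod.snd hp)
          · intro h
            exact hwNA (mem_nbhd.2 ⟨hwV, hwA, p.1, Finset.mem_image_of_mem _ hp,
              by rwa [Finset.pair_comm] at h⟩)
          · intro h
            exact hvNA (mem_nbhd.2 ⟨hvV, hvA, p.1, Finset.mem_image_of_mem _ hp,
              by rwa [Finset.pair_comm] at h⟩)
        · exact hM2 p hp q hq hpq
    have hsub' : insert (w, v) M ⊆ verts Eg ×ˢ verts Eg := by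
      intro p hp
      rcases Finset.mem_insert.1 hp with rfl | hp
      · exact Finset.mem_product.2 ⟨hwV, hvV⟩
      · exact hMsub hp
    have hle : (insert (w, v) M).card ≤ M.card :=
      hmax _ (Finset.mem_filter.2 ⟨Finset.mem_powerset.2 hsub', hgood⟩)
    rw [Finset.card_insert_of_notMem hnew] at hle
    omega
  -- the two "boundary" sets
  set B1 := M.biUnion (fun p => (nbhd Eg {p.1}).erase p.2) with hB1
  set B2 := M.biUnion (fun p => (nbhd Eg {p.2}).erase p.1) with hB2
  have hB1card : B1.card ≤ e * d' := by
    refine le_trans Finset.card_biUnion_le ?_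
    refine le_trans (Finset.sum_le_card_nsmul M _ d' ?_) (by simp [he, smul_eq_mul])
    intro p hp
    have h1 := hM1 p hp
    have hne : p.2 ≠ p.1 := fun h => h1.2.2.1 (h ▸ h1.1)
    have hmem : p.2 ∈ nbhd Eg ({p.1} : Finset Var) := by
      refine mem_nbhd.2 ⟨h1.2.1, by simpa using hne, p.1, Finset.mem_singleton_self _, ?_⟩
      rw [Finset.pair_comm]; exact h1.2.2.2
    rw [Finset.card_erase_of_mem hmem]
    have := card_nbhd_single hdeg p.1
    omega
  have hB2card : B2.card ≤ e * d' := by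
    refine le_trans Finset.card_biUnion_le ?_
    refine le_trans (Finset.sum_le_card_nsmul M _ d' ?_) (by simp [he, smul_eq_mul])
    intro p hp
    have h1 := hM1 p hp
    have hne : p.1 ≠ p.2 := fun h => h1.2.2.1 (h ▸ h1.1)
    have hmem : p.1 ∈ nbhd Eg ({p.2} : Finset Var) := by
      refine mem_nbhd.2 ⟨hS h1.1, by simpa using hne, p.2, Finset.mem_singleton_self _,
        h1.2.2.2⟩
    rw [Finset.card_erase_of_mem hmem]
    have := card_nbhd_single hdeg p.2
    omega
  -- S ∩ F is small
  have hSF : S ∩ F ⊆ A ∪ B1 ∪ B2 := by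
    intro v hv
    obtain ⟨hvS, hvF⟩ := Finset.mem_inter.1 hv
    by_cases hvA : v ∈ A
    · exact Finset.mem_union_left _ (Finset.mem_union_left _ hvA)
    rcases Finset.mem_union.1 hvF with hvF' | hvNU
    · rcases Finset.mem_union.1 hvF' with hvA' | hvNA
      · exact absurd hvA' hvA
      · obtain ⟨hvV, _, w, hwA, hedge⟩ := mem_nbhd.1 hvNA
        obtain ⟨p, hp, rfl⟩ := Finset.mem_image.1 hwA
        refine Finset.mem_union_left _ (Finset.mem_union_right _ ?_)
        refine Finset.mem_biUnion.2 ⟨p, hp, Finset.mem_erase.2 ⟨?_, ?_⟩⟩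
        · intro h; subst h; exact (hM1 p hp).2.2.1 hvS
        · refine mem_nbhd.2 ⟨hvV, ?_, p.1, Finset.mem_singleton_self _, hedge⟩
          simp only [Finset.mem_singleton]
          intro h; subst h; exact hvA (Finset.mem_image_of_mem Prod.fst hp)
    · obtain ⟨hvV, _, w, hwU, hedge⟩ := mem_nbhd.1 hvNU
      obtain ⟨p, hp, rfl⟩ := Finset.mem_image.1 hwU
      refine Finset.mem_union_right _ ?_
      refine Finset.mem_biUnion.2 ⟨p, hp, Finset.mem_erase.2 ⟨?_, ?_⟩⟩
      · intro h; subst h; exact hvA (Finset.mem_image_of_mem Prod.fst hp)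
      · refine mem_nbhd.2 ⟨hvV, ?_, p.2, Finset.mem_singleton_self _, hedge⟩
        simp only [Finset.mem_singleton]
        intro h; subst h; exact (hM1 p hp).2.2.1 hvS
  -- the neighborhood of W is small
  have hNW : nbhd Eg W ⊆ A ∪ B1 ∪ B2 ∪ U := by
    intro v hv
    obtain ⟨hvV, hvW, w, hwW, hedge⟩ := mem_nbhd.1 hv
    obtain ⟨hwS, hwF⟩ := Finset.mem_sdiff.1 hwW
    by_cases hvA : v ∈ A
    · exact Finset.mem_union_left _ (Finset.mem_union_left _ (Finset.mem_union_left _ hvA))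
    by_cases hvU : v ∈ U
    · exact Finset.mem_union_right _ hvU
    by_cases hvNA : v ∈ nbhd Eg A
    · obtain ⟨_, _, w', hw'A, hedge'⟩ := mem_nbhd.1 hvNA
      obtain ⟨p, hp, rfl⟩ := Finset.mem_image.1 hw'A
      refine Finset.mem_union_left _ (Finset.mem_union_left _ (Finset.mem_union_right _ ?_))
      refine Finset.mem_biUnion.2 ⟨p, hp, Finset.mem_erase.2 ⟨?_, ?_⟩⟩
      · intro h; subst h; exact hvU (Finset.mem_image_of_mem Prod.snd hp)
      · refine mem_nbhd.2 ⟨hvV, ?_, p.1, Finset.mem_singleton_self _, hedge'⟩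
        simp only [Finset.mem_singleton]
        intro h; subst h; exact hvA (Finset.mem_image_of_mem Prod.fst hp)
    by_cases hvS : v ∈ S
    · have hvF : v ∈ F := by
        by_contra h
        exact hvW (Finset.mem_sdiff.2 ⟨hvS, h⟩)
      rcases Finset.mem_union.1 hvF with hvF' | hvNU
      · rcases Finset.mem_union.1 hvF' with hvA' | hvNA'
        · exact absurd hvA' hvA
        · exact absurd hvNA' hvNA
      · obtain ⟨_, _, w', hw'U, hedge'⟩ := mem_nbhd.1 hvNU
        obtain ⟨p, hp, rfl⟩ := Finset.mem_image.1 hw'U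
        refine Finset.mem_union_left _ (Finset.mem_union_right _ ?_)
        refine Finset.mem_biUnion.2 ⟨p, hp, Finset.mem_erase.2 ⟨?_, ?_⟩⟩
        · intro h; subst h; exact hvA (Finset.mem_image_of_mem Prod.fst hp)
        · refine mem_nbhd.2 ⟨hvV, ?_, p.2, Finset.mem_singleton_self _, hedge'⟩
          simp only [Finset.mem_singleton]
          intro h; subst h; exact (hM1 p hp).2.2.1 hvS
    · exact absurd (hext w v hwS hwF hvV hvS hvU hvNA
        (by rwa [Finset.pair_comm] at hedge)) (fun h => h)
  -- cardinality bounds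
  have hNWcard : (nbhd Eg W).card ≤ e + e * d' + e * d' + e := by
    have h0 := Finset.card_le_card hNW
    have h1 := Finset.card_union_le (A ∪ B1 ∪ B2) U
    have h2 := Finset.card_union_le (A ∪ B1) B2
    have h3 := Finset.card_union_le A B1
    linarith
  have hSFcard : (S ∩ F).card ≤ e + e * d' + e * d' := by
    have h0 := Finset.card_le_card hSF
    have h2 := Finset.card_union_le (A ∪ B1) B2
    have h3 := Finset.card_union_le A B1
    linarith
  have hWS : W.card + (S ∩ F).card = S.card := Finset.card_sdiff_add_card_inter S F
  -- expansion applied to W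
  have hWsub : W ⊆ verts Eg := fun x hx => hS (Finset.mem_sdiff.1 hx).1
  have hWhalf : (W.card : ℝ) ≤ (n : ℝ) / 2 := by
    have h1 : W.card ≤ S.card := Finset.card_le_card Finset.sdiff_subset
    have h2 : ((n / 2 : ℕ) : ℝ) ≤ (n : ℝ) / 2 := by
      exact_mod_cast Nat.cast_div_le (α := ℝ)
    calc (W.card : ℝ) ≤ (S.card : ℝ) := by exact_mod_cast h1
      _ ≤ (n : ℝ) / 2 := by rw [hcard]; exact h2
  have hexpW := hexpand W hWsub hWhalf
  -- real arithmetic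
  have hnS : (n : ℝ) ≤ 2 * (S.card : ℝ) + 1 := by
    have hnat : n ≤ 2 * S.card + 1 := by omega
    exact_mod_cast hnat
  have hcast1 : ((nbhd Eg W).card : ℝ) ≤ 2 * e + 2 * e * d' := by
    have := hNWcard
    have h : ((nbhd Eg W).card : ℝ) ≤ ((e + e * d' + e * d' + e : ℕ) : ℝ) := by
      exact_mod_cast this
    push_cast at h
    linarith
  have hcast2 : (S.card : ℝ) ≤ (W.card : ℝ) + (e + 2 * e * d') := by
    have hnat : S.card ≤ W.card + (e + e * d' + e * d') := by
      rw [← hWS]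
      have := hSFcard
      omega
    have h : (S.card : ℝ) ≤ ((W.card + (e + e * d' + e * d') : ℕ) : ℝ) := by
      exact_mod_cast hnat
    push_cast at h
    linarith
  have hWpos : (0 : ℝ) ≤ (W.card : ℝ) := Nat.cast_nonneg _
  have hEpos : (0 : ℝ) ≤ (e : ℝ) := Nat.cast_nonneg _
  have hDpos : (0 : ℝ) ≤ (d' : ℝ) := Nat.cast_nonneg _
  have hstep1 : a' * (W.card : ℝ) ≤ 2 * e + 2 * e * d' := by
    have : a' * (W.card : ℝ) ≤ a * (W.card : ℝ) := mul_le_mul_of_nonneg_right ha'lea hWpos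
    linarith
  have hstep2 : a' * (S.card : ℝ) ≤ 3 * e + 4 * e * d' := by
    have h1 : a' * (S.card : ℝ) ≤ a' * ((W.card : ℝ) + (e + 2 * e * d')) :=
      mul_le_mul_of_nonneg_left hcast2 (le_of_lt ha'pos)
    have h2 : a' * ((e : ℝ) + 2 * e * d') ≤ (e : ℝ) + 2 * e * d' :=
      mul_le_of_le_one_left (by positivity) ha'le1
    nlinarith
  have hkey : a' * n ≤ 8 * (d' + 1) * e := by
    have hu1 : a' * (n : ℝ) ≤ a' * (2 * (S.card : ℝ) + 1) :=
      mul_le_mul_of_nonneg_left hnS ha'pos.le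
    rcases Nat.eq_zero_or_pos e with he0 | he1
    · exfalso
      have hE0 : (e : ℝ) = 0 := by exact_mod_cast he0
      have hED : (e : ℝ) * (d' : ℝ) = 0 := by rw [hE0]; ring
      have hn2 : (2 : ℝ) ≤ (n : ℝ) := by exact_mod_cast hn
      have hu2 : a' * 2 ≤ a' * (n : ℝ) := mul_le_mul_of_nonneg_left hn2 ha'pos.le
      nlinarith [hstep2]
    · have hE1 : (1 : ℝ) ≤ (e : ℝ) := by exact_mod_cast he1
      nlinarith [hstep2, hu1, ha'le1]
  refine ⟨e, ?_, ?_⟩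
  · have hdpos : (0 : ℝ) < 8 * ((d' + 1 : ℕ) : ℝ) := by positivity
    rw [div_mul_eq_mul_div, div_le_iff₀ hdpos]
    push_cast
    push_cast at hkey
    nlinarith
  · -- construct the functions
    have hg : ∃ g : Fin e → Var × Var, Function.Injective g ∧ ∀ i, g i ∈ M := by
      refine ⟨fun i => (M.equivFin.symm i : Var × Var), ?_, fun i => Finset.coe_mem _⟩
      intro i j hij
      exact M.equivFin.symm.injective (Subtype.ext hij)
    obtain ⟨g, hginj, hgmem⟩ := hg
    have hgne : ∀ i j : Fin e, i ≠ j → g i ≠ g j := fun i j hij h => hij (hginj h)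
    refine ⟨fun i => (g i).1, fun i => (g i).2, ?_, ?_, ?_, ?_, ?_, ?_, ?_⟩
    · intro i j h
      by_contra hij
      exact (hM2 (g i) (hgmem i) (g j) (hgmem j) (hgne i j hij)).1 h
    · intro i j h
      by_contra hij
      exact (hM2 (g i) (hgmem i) (g j) (hgmem j) (hgne i j hij)).2.1 h
    · intro i j h
      have h' : (g i).1 = (g j).2 := h
      exact (hM1 (g j) (hgmem j)).2.2.1 (h' ▸ (hM1 (g i) (hgmem i)).1)
    · intro i
      exact (hM1 (g i) (hgmem i)).1
    · intro i
      exact Finset.mem_sdiff.2 ⟨(hM1 (g i) (hgmem i)).2.1, (hM1 (g i) (hgmem i)).2.2.1⟩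
    · intro i
      exact (hM1 (g i) (hgmem i)).2.2.2
    · intro i j hij
      exact ⟨(hM2 (g i) (hgmem i) (g j) (hgmem j) (hgne i j hij)).2.2.1,
        (hM2 (g i) (hgmem i) (g j) (hgmem j) (hgne i j hij)).2.2.2⟩
end
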